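/- Let π be a set of primes, G a finite π-separable group, c ∈ H²G with c = c_π c_{π'}, and V an irreducible c-module with a decomposition V = Ind_J^{cG}(V_π ⊗ V_{π'}) where V_π is an irreducible c_π|_J-module whose restriction to a Hall π-subgroup of J is irreducible and V_{π'} is an irreducible c_{π'}|_J-module whose restriction to a Hall π'-subgroup of J is irreducible. Then (dim V)_π = |G:J|_π · dim V_π and (dim V)_{π'} = |G:J|_{π'} · dim V_{π'}. -/

import Mathlib

open scoped TensorProduct Classical

namespace ProjIM

variable {G : Type*} [Group G]

/-- The multiplicative 2-cocycle condition for `α : G → G → ℂˣ`. -/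
def IsMulCocycle (α : G → G → ℂˣ) : Prop :=
  ∀ x y z, α x y * α (x * y) z = α y z * α x (y * z)

/-- The group of `ℂˣ`-valued 2-cocycles of `G` (trivial action). -/
def CocycleGroup (G : Type*) [Group G] : Subgroup (G → G → ℂˣ) where
  carrier := {α | IsMulCocycle α}
  one_mem' := by intro x y z; simp
  mul_mem' := by
    intro a b ha hb x y z
    simp only [Pi.mul_apply]
    rw [mul_mul_mul_comm, ha x y z, hb x y z, mul_mul_mul_comm]
  inv_mem' := by
    intro a ha x y z
    simp only [Pi.inv_apply]
    rw [← mul_inv, ← mul_inv, ha x y z]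

/-- The subgroup of 2-coboundaries inside the group of 2-cocycles. -/
def coboundaries (G : Type*) [Group G] : Subgroup (CocycleGroup G) where
  carrier := {a | ∃ ζ : G → ℂˣ, ∀ x y, (a : G → G → ℂˣ) x y = ζ x * ζ y * (ζ (x * y))⁻¹}
  one_mem' := ⟨1, by intro x y; simp⟩
  mul_mem' := by
    rintro a b ⟨ζ, hζ⟩ ⟨η, hη⟩
    refine ⟨ζ * η, fun x y => ?_⟩
    have : ((a * b : CocycleGroup G) : G → G → ℂˣ) x y
        = (a : G → G → ℂˣ) x y * (b : G → G → ℂˣ) x y := rfl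
    rw [this, hζ, hη]
    simp only [Pi.mul_apply, mul_inv]
    ac_rfl
  inv_mem' := by
    rintro a ⟨ζ, hζ⟩
    refine ⟨ζ⁻¹, fun x y => ?_⟩
    have : ((a⁻¹ : CocycleGroup G) : G → G → ℂˣ) x y = ((a : G → G → ℂˣ) x y)⁻¹ := rfl
    rw [this, hζ]
    simp only [Pi.inv_apply, mul_inv, inv_inv]
    try ac_rfl

/-- The Schur multiplier `H²(G, ℂˣ)` (trivial action): cocycles modulo coboundaries. -/
abbrev SchurMultiplier (G : Type*) [Group G] := CocycleGroup G ⧸ coboundaries G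

/-- The coclass of a cocycle. -/
def mkClass (a : CocycleGroup G) : SchurMultiplier G := QuotientGroup.mk a

/-- Pullback of cocycles along a group homomorphism. -/
def cocyclePull {H : Type*} [Group H] (f : H →* G) : CocycleGroup G →* CocycleGroup H where
  toFun a := ⟨fun x y => (a : G → G → ℂˣ) (f x) (f y), by
    intro x y z
    have h := a.2 (f x) (f y) (f z)
    simpa [map_mul] using h⟩
  map_one' := rfl
  map_mul' a b := rfl

/-- Pullback (restriction/inflation) on Schur multipliers along a group homomorphism. -/
def H2Pull {H : Type*} [Group H] (f : H →* G) : SchurMultiplier G →* SchurMultiplier H :=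
  QuotientGroup.map _ _ (cocyclePull f) (by
    rintro a ⟨ζ, hζ⟩
    exact ⟨ζ ∘ f, fun x y => by
      simpa [cocyclePull, map_mul] using hζ (f x) (f y)⟩)

/-- Restriction of a coclass to a subgroup. -/
abbrev H2Res (H : Subgroup G) : SchurMultiplier G →* SchurMultiplier H := H2Pull H.subtype

variable {M M' MV U : Type*} [AddCommGroup M] [Module ℂ M] [AddCommGroup M'] [Module ℂ M']
  [AddCommGroup MV] [Module ℂ MV] [AddCommGroup U] [Module ℂ U]

/-- A projective representation of `G` on the complex vector space `M`,
with an explicit 2-cocycle `α`. -/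
structure ProjRep (G : Type*) [Group G] (M : Type*) [AddCommGroup M] [Module ℂ M] where
  α : CocycleGroup G
  φ : G → M ≃ₗ[ℂ] M
  rel : ∀ x y (v : M), φ x (φ y v) = ((α : G → G → ℂˣ) x y : ℂ) • φ (x * y) v

/-- The coclass in the Schur multiplier determined by a projective representation. -/
def ProjRep.coclass (ρ : ProjRep G M) : SchurMultiplier G := QuotientGroup.mk ρ.α

/-- Irreducibility of a projective representation: the only invariant subspaces are trivial. -/
def ProjRep.Irreducible (ρ : ProjRep G M) : Prop :=
  Nontrivial M ∧ ∀ W : Submodule ℂ M, (∀ g : G, ∀ v ∈ W, ρ.φ g v ∈ W) → W = ⊥ ∨ W = ⊤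

/-- Pullback of a projective representation along a group homomorphism
(e.g. restriction to a subgroup, or inflation from a quotient). -/
def ProjRep.pull {H : Type*} [Group H] (f : H →* G) (ρ : ProjRep G M) : ProjRep H M where
  α := cocyclePull f ρ.α
  φ h := ρ.φ (f h)
  rel x y v := by rw [map_mul]; exact ρ.rel (f x) (f y) v

/-- Restriction of a projective representation to a subgroup. -/
def ProjRep.res (ρ : ProjRep G M) (H : Subgroup G) : ProjRep H M := ρ.pull H.subtype

/-- Tensor product of two projective representations; the cocycles multiply. -/
noncomputable def ProjRep.tprod (ρ : ProjRep G M) (σ : ProjRep G M') :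
    ProjRep G (M ⊗[ℂ] M') where
  α := ρ.α * σ.α
  φ g := TensorProduct.congr (ρ.φ g) (σ.φ g)
  rel x y v := by
    have h : (TensorProduct.congr (ρ.φ x) (σ.φ x)).toLinearMap ∘ₗ
          (TensorProduct.congr (ρ.φ y) (σ.φ y)).toLinearMap
        = (((ρ.α : G → G → ℂˣ) x y : ℂ) * ((σ.α : G → G → ℂˣ) x y : ℂ)) •
          (TensorProduct.congr (ρ.φ (x * y)) (σ.φ (x * y))).toLinearMap := by
      apply TensorProduct.ext'
      intro m n
      simp [TensorProduct.congr_tmul, ρ.rel, σ.rel, TensorProduct.smul_tmul',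
        TensorProduct.tmul_smul, smul_smul, mul_comm]
    have h2 := LinearMap.congr_fun h v
    exact h2

open scoped TensorProduct in
/-- Tensor product of a finite family of projective representations. -/
noncomputable def ProjRep.tprodPi {ι : Type*} [Fintype ι] {N : ι → Type*}
    [∀ i, AddCommGroup (N i)] [∀ i, Module ℂ (N i)]
    (ρ : ∀ i, ProjRep G (N i)) : ProjRep G (⨂[ℂ] i, N i) where
  α := ∏ i, (ρ i).α
  φ g := PiTensorProduct.congr fun i => (ρ i).φ g
  rel x y v := by
    have h : (PiTensorProduct.congr fun i => (ρ i).φ x).toLinearMap ∘ₗ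
          (PiTensorProduct.congr fun i => (ρ i).φ y).toLinearMap
        = (∏ i, (((ρ i).α : G → G → ℂˣ) x y : ℂ)) •
          (PiTensorProduct.congr fun i => (ρ i).φ (x * y)).toLinearMap := by
      apply PiTensorProduct.ext
      apply MultilinearMap.ext
      intro m
      simp only [LinearMap.compMultilinearMap_apply, LinearMap.coe_comp,
        LinearEquiv.coe_coe, Function.comp_apply, PiTensorProduct.congr_tprod,
        LinearMap.smul_apply]
      rw [funext fun i => (ρ i).rel x y (m i)]
      rw [MultilinearMap.map_smul_univ]
    have h2 := LinearMap.congr_fun h v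
    have hc1 : ((∏ i, (ρ i).α : CocycleGroup G) : G → G → ℂˣ)
        = ∏ i, ((ρ i).α : G → G → ℂˣ) :=
      SubmonoidClass.coe_finset_prod _ _
    have hcoe : (((∏ i, (ρ i).α : CocycleGroup G) : G → G → ℂˣ) x y : ℂ)
        = ∏ i, (((ρ i).α : G → G → ℂˣ) x y : ℂ) := by
      rw [hc1]
      simp only [Finset.prod_apply]
      exact map_prod (Units.coeHom ℂ) _ _
    simpa [hcoe, smul_smul] using h2

/-- Similarity (projective equivalence) of projective representations: the cocycles differ by
a coboundary `δζ` and the actions are intertwined by a linear equivalence, twisted by `ζ`. -/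
def ProjRep.IsSimilar (ρ : ProjRep G M) (σ : ProjRep G M') : Prop :=
  ∃ (ζ : G → ℂˣ) (e : M ≃ₗ[ℂ] M'),
    (∀ x y : G, (σ.α : G → G → ℂˣ) x y
        = (ρ.α : G → G → ℂˣ) x y * ζ x * ζ y * (ζ (x * y))⁻¹) ∧
    ∀ (g : G) (v : M), σ.φ g (e v) = (ζ g : ℂ) • e (ρ.φ g v)

/-- `V` occurs as an (irreducible) constituent of `ρ`: there is an injective equivariant map
`V → ρ`, up to a coboundary twist of the cocycles. -/
def ProjRep.HasConstituent {K : Type*} [Group K] (ρ : ProjRep K M') (V : ProjRep K MV) : Prop :=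
  ∃ (ζ : K → ℂˣ) (e : MV →ₗ[ℂ] M'), Function.Injective e ∧
    (∀ x y : K, (ρ.α : K → K → ℂˣ) x y
        = (V.α : K → K → ℂˣ) x y * ζ x * ζ y * (ζ (x * y))⁻¹) ∧
    ∀ (x : K) (v : MV), ρ.φ x (e v) = (ζ x : ℂ) • e (V.φ x v)

/-- `ρ` is induced from the projective representation `σ` of the subgroup `J`:
up to a coboundary twist, `σ` embeds `J`-equivariantly into `ρ` and `M` is the (direct) sum of
the translates of its image along a transversal of `J` in `G`. -/
def ProjRep.IsInducedFrom (ρ : ProjRep G M) (J : Subgroup G) (σ : ProjRep J U) : Prop :=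
  ∃ ζ : J → ℂˣ,
    (∀ x y : J, (σ.α : ↥J → ↥J → ℂˣ) x y
        = (ρ.α : G → G → ℂˣ) x y * ζ x * ζ y * (ζ (x * y))⁻¹) ∧
    ∃ e : U →ₗ[ℂ] M, Function.Injective e ∧
      (∀ (j : J) (u : U), ρ.φ j (e u) = ((ζ j : ℂ))⁻¹ • e (σ.φ j u)) ∧
      ∃ T : Finset G, (∀ g : G, ∃! t, t ∈ T ∧ t⁻¹ * g ∈ J) ∧
        (⨆ t ∈ T, (LinearMap.range e).map (ρ.φ t).toLinearMap) = ⊤ ∧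
        Module.finrank ℂ M = T.card * Module.finrank ℂ U

/-- A projective representation of `K` factors through the quotient `K/N` (i.e. it is inflated
from `K/N`) if both the cocycle and the action are constant on cosets of `N`. -/
def ProjRep.FactorsThrough {K : Type*} [Group K] (ρ : ProjRep K M) (N : Subgroup K) : Prop :=
  (∀ x x' y y' : K, x⁻¹ * x' ∈ N → y⁻¹ * y' ∈ N →
      (ρ.α : K → K → ℂˣ) x y = (ρ.α : K → K → ℂˣ) x' y') ∧
  (∀ x x' : K, x⁻¹ * x' ∈ N → ρ.φ x = ρ.φ x')

/-- A coclass of `K` is inflated from `K/N` if it is represented by a cocycle constant on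
cosets of `N`. -/
def InflatedClass {K : Type*} [Group K] (N : Subgroup K) (b : SchurMultiplier K) : Prop :=
  ∃ a : CocycleGroup K, mkClass a = b ∧
    ∀ x x' y y' : K, x⁻¹ * x' ∈ N → y⁻¹ * y' ∈ N →
      (a : K → K → ℂˣ) x y = (a : K → K → ℂˣ) x' y'

/-- The inertia set `I_G^c(V)` of a projective representation `φ` of a (normal) subgroup `N`,
with respect to a global cocycle `a` of `G` restricting to the cocycle of `φ`. -/
def inertiaSet (a : CocycleGroup G) (N : Subgroup G) (φ : N → M ≃ₗ[ℂ] M) : Set G :=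
  {g | ∃ y : M ≃ₗ[ℂ] M, ∀ (x : G) (hx : x ∈ N) (hxg : g⁻¹ * x * g ∈ N) (v : M),
      y.symm ((φ ⟨x, hx⟩) (y v)) =
        (((a : G → G → ℂˣ) x g : ℂ) * (((a : G → G → ℂˣ) g (g⁻¹ * x * g) : ℂ))⁻¹) •
          φ ⟨g⁻¹ * x * g, hxg⟩ v}

/-- The `c`-class sum of `x` in the twisted group algebra `ℂ^c K`
(coordinates with respect to the standard basis). -/
noncomputable def classSum {K : Type*} [Group K] (a : CocycleGroup K) (x : K) : K → ℂ :=
  fun z => ((Nat.card (Subgroup.centralizer {x} : Subgroup K) : ℂ))⁻¹ *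
    ∑ᶠ g : K, if z = g⁻¹ * x * g then
      ((a : K → K → ℂˣ) x g : ℂ) * (((a : K → K → ℂˣ) g (g⁻¹ * x * g) : ℂ))⁻¹ else 0

/-- An element is `c`-regular if its class sum in the twisted group algebra is nonzero. -/
def IsCRegular {K : Type*} [Group K] (a : CocycleGroup K) (x : K) : Prop :=
  classSum a x ≠ 0

/-- Multiplication in the twisted group algebra `ℂ^a K`, in coordinates. -/
noncomputable def twistedMul {K : Type*} [Group K] (a : CocycleGroup K) (f g : K → ℂ) : K → ℂ :=
  fun z => ∑ᶠ x : K, ((a : K → K → ℂˣ) x (x⁻¹ * z) : ℂ) * f x * g (x⁻¹ * z)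

/-- The center of the twisted group algebra `ℂ^a K`, in coordinates. -/
def twistedCenter {K : Type*} [Group K] (a : CocycleGroup K) : Set (K → ℂ) :=
  {f | ∀ g : K → ℂ, twistedMul a f g = twistedMul a g f}

/-- Conjugation by `g ∈ G` on the twisted group algebra `ℂ^a N` of a normal subgroup `N`,
in coordinates: `(xσ)^(gσ) = a x g * (a g (g⁻¹xg))⁻¹ • (g⁻¹xg)σ`. -/
noncomputable def conjTwisted (a : CocycleGroup G) (N : Subgroup G) (hN : N.Normal) (g : G)
    (f : N → ℂ) : N → ℂ :=
  fun z => ((a : G → G → ℂˣ) (g * z * g⁻¹) g : ℂ) * (((a : G → G → ℂˣ) g (z : G) : ℂ))⁻¹ *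
    f ⟨g * z * g⁻¹, hN.conj_mem z.1 z.2 g⟩

/-- `n` is a `π`-number: all its prime divisors lie in `π`. -/
def IsPiNumber (π : Set ℕ) (n : ℕ) : Prop := ∀ p : ℕ, p.Prime → p ∣ n → p ∈ π

/-- `H` is a Hall `π`-subgroup of `G`: its order is a `π`-number and its index a `π'`-number. -/
def IsHall (π : Set ℕ) (H : Subgroup G) : Prop :=
  IsPiNumber π (Nat.card H) ∧ IsPiNumber πᶜ H.index

/-- `G` is `π`-separable: it has a normal series each of whose factors is
a `π`-group or a `π'`-group. -/
def IsPiSeparable (π : Set ℕ) (G : Type*) [Group G] : Prop :=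
  ∃ (l : ℕ) (s : Fin (l + 1) → Subgroup G), s 0 = ⊥ ∧ s (Fin.last l) = ⊤ ∧ Monotone s ∧
    (∀ i, (s i).Normal) ∧
    ∀ i : Fin l, IsPiNumber π ((s i.castSucc).relIndex (s i.succ)) ∨
      IsPiNumber πᶜ ((s i.castSucc).relIndex (s i.succ))

/-- `N = O_π(G)` is the largest normal subgroup of `G` whose order is a `π`-number. -/
def IsPiCore (π : Set ℕ) (N : Subgroup G) : Prop :=
  N.Normal ∧ IsPiNumber π (Nat.card N) ∧
    ∀ K : Subgroup G, K.Normal → IsPiNumber π (Nat.card K) → K ≤ N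

/-- `N₂/N₁ = O_π(G/N₁)`: `N₂` is the largest normal subgroup of `G` containing `N₁` such that
`N₂/N₁` is a `π`-group. -/
def IsPiCoreAbove (π : Set ℕ) (N₁ N₂ : Subgroup G) : Prop :=
  N₂.Normal ∧ N₁ ≤ N₂ ∧ IsPiNumber π (N₁.relIndex N₂) ∧
    ∀ K : Subgroup G, K.Normal → N₁ ≤ K → IsPiNumber π (N₁.relIndex K) → K ≤ N₂

/-- The `π`-part of a natural number. -/
noncomputable def piPart (π : Set ℕ) (n : ℕ) : ℕ :=
  n.factorization.prod fun p k => if p ∈ π then p ^ k else 1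

/-- The set of primes dividing the degree of some irreducible `c`-module of `G`. -/
def PiIrr (G : Type*) [Group G] (c : SchurMultiplier G) : Set ℕ :=
  {p | p.Prime ∧ ∃ (n : ℕ) (ρ : ProjRep G (Fin n → ℂ)), ρ.Irreducible ∧ ρ.coclass = c ∧ p ∣ n}


end ProjIM

open Module Polynomial

namespace ProjIM

section KeyDvd

variable {W : Type} [AddCommGroup W] [Module ℂ W] [FiniteDimensional ℂ W]
variable {K : Type} [Group K]



variable {W : Type} [AddCommGroup W] [Module ℂ W] [FiniteDimensional ℂ W]

lemma hasEig_of_isRoot_charpoly (f : Module.End ℂ W) (μ : ℂ)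
    (h : (LinearMap.charpoly f).IsRoot μ) : f.HasEigenvalue μ := by
  classical
  rw [Module.End.hasEigenvalue_iff_mem_spectrum, spectrum.mem_iff]
  intro hu
  set b := Module.Free.chooseBasis ℂ W
  set M := LinearMap.toMatrix b b f with hM
  have h1 : M.charpoly.IsRoot μ := by
    rw [LinearMap.charpoly_toMatrix]; exact h
  have h2 : (M.charmatrix.map (evalRingHom μ)).det = 0 := by
    rw [show M.charmatrix.map (evalRingHom μ) = (evalRingHom μ).mapMatrix M.charmatrix from
      (RingHom.mapMatrix_apply _ _).symm, ← RingHom.map_det]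
    simpa [Matrix.charpoly] using h1
  have h3 : M.charmatrix.map (evalRingHom μ) = Matrix.diagonal (fun _ => μ) - M := by
    ext i j
    by_cases hij : i = j <;>
      simp [Matrix.map_apply, Matrix.charmatrix_apply, Matrix.diagonal_apply, hij]
  have h4 : LinearMap.toMatrix b b ((algebraMap ℂ (Module.End ℂ W)) μ - f)
      = Matrix.diagonal (fun _ => μ) - M := by
    rw [map_sub, Module.algebraMap_end_eq_smul_id, map_smul, ← hM]
    congr 1
    have : (LinearMap.id : W →ₗ[ℂ] W) = 1 := rfl
    rw [this, LinearMap.toMatrix_one]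
    ext i j
    by_cases hij : i = j <;> simp [Matrix.diagonal_apply, hij, Matrix.one_apply]
  have h5 : LinearMap.det ((algebraMap ℂ (Module.End ℂ W)) μ - f) = 0 := by
    rw [← LinearMap.det_toMatrix b, h4, ← h3, h2]
  have := LinearMap.isUnit_det _ hu
  rw [h5] at this
  exact (by simpa using this : False)

lemma eig_pow_eq_one (f : Module.End ℂ W) (n : ℕ) (hf : f ^ n = 1) (μ : ℂ)
    (h : f.HasEigenvalue μ) : μ ^ n = 1 := by
  obtain ⟨v, hv⟩ := h.exists_hasEigenvector
  have hpow : ∀ k : ℕ, (f ^ k) v = μ ^ k • v := by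
    intro k
    induction k with
    | zero => simp
    | succ k ih =>
      rw [pow_succ, pow_succ, Module.End.mul_apply, hv.apply_eq_smul, map_smul, ih, smul_smul,
        mul_comm]
  have h1 : μ ^ n • v = v := by rw [← hpow, hf]; rfl
  by_contra hne
  have : (μ ^ n - 1) • v = 0 := by rw [sub_smul, h1, one_smul, sub_self]
  rcases smul_eq_zero.mp this with h' | h'
  · exact hne (by linear_combination h')
  · exact hv.right h'

lemma trace_integral (f : Module.End ℂ W) (n : ℕ) (hn : n ≠ 0) (hf : f ^ n = 1) :
    IsIntegral ℤ (LinearMap.trace ℂ W f) := by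
  classical
  set b := Module.Free.chooseBasis ℂ W
  set M := LinearMap.toMatrix b b f with hM
  rw [LinearMap.trace_eq_matrix_trace ℂ b, Matrix.trace_eq_sum_roots_charpoly]
  have hroots : ∀ μ ∈ M.charpoly.roots, IsIntegral ℤ μ := by
    intro μ hμ
    have hr : M.charpoly.IsRoot μ := (Polynomial.mem_roots (Matrix.charpoly_monic M).ne_zero).mp hμ
    have hr' : (LinearMap.charpoly f).IsRoot μ := by rwa [LinearMap.charpoly_toMatrix] at hr
    have he := hasEig_of_isRoot_charpoly f μ hr'
    have hμn : μ ^ n = 1 := eig_pow_eq_one f n hf μ he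
    exact ⟨X ^ n - C 1, monic_X_pow_sub_C 1 hn, by simp [hμn]⟩
  -- multiset sum of integral elements
  have : ∀ s : Multiset ℂ, (∀ x ∈ s, IsIntegral ℤ x) → IsIntegral ℤ s.sum := by
    intro s
    induction s using Multiset.induction with
    | empty => intro _; simpa using isIntegral_zero
    | cons a t ih =>
      intro hs
      rw [Multiset.sum_cons]
      exact (hs a (Multiset.mem_cons_self a t)).add
        (ih fun x hx => hs x (Multiset.mem_cons_of_mem hx))
  exact this _ hroots

variable {K : Type} [Group K]

lemma schur_scalar [Nontrivial W] (ρ : Representation ℂ K W)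
    (hirr : ∀ U : Submodule ℂ W, (∀ g v, v ∈ U → ρ g v ∈ U) → U = ⊥ ∨ U = ⊤)
    (f : Module.End ℂ W) (hf : ∀ g, ρ g * f = f * ρ g) :
    ∃ c : ℂ, f = c • (1 : Module.End ℂ W) := by
  obtain ⟨c, hc⟩ := Module.End.exists_eigenvalue f
  refine ⟨c, ?_⟩
  have hU : ∀ g v, v ∈ f.eigenspace c → ρ g v ∈ f.eigenspace c := by
    intro g v hv
    rw [Module.End.mem_eigenspace_iff] at hv ⊢
    have h2 := congrArg (fun (t : Module.End ℂ W) => t v) (hf g)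
    simp only [Module.End.mul_apply] at h2
    rw [← h2, hv, map_smul]
  rcases hirr _ hU with hbot | htop
  · exact absurd hbot (Module.End.hasEigenvalue_iff.mp hc)
  · ext v
    have hv : v ∈ f.eigenspace c := htop ▸ Submodule.mem_top
    rw [Module.End.mem_eigenspace_iff] at hv
    simpa using hv

lemma key_dvd [Fintype K] (ρ : Representation ℂ K W) (hnt : Nontrivial W)
    (hirr : ∀ U : Submodule ℂ W, (∀ g v, v ∈ U → ρ g v ∈ U) → U = ⊥ ∨ U = ⊤) :
    Module.finrank ℂ W ∣ Fintype.card K := by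
  classical
  haveI := hnt
  set d := Module.finrank ℂ W with hd
  have hdpos : 0 < d := Module.finrank_pos
  set χ : K → ℂ := fun g => LinearMap.trace ℂ W (ρ g) with hχ
  -- conjugation invariance of χ
  have hχconj : ∀ u g : K, χ (u * g * u⁻¹) = χ g := by
    intro u g
    simp only [hχ, map_mul]
    rw [LinearMap.trace_mul_comm, ← mul_assoc, ← map_mul, inv_mul_cancel, map_one, one_mul]
  -- χ values are integral
  have hχint : ∀ g : K, IsIntegral ℤ (χ g) := by
    intro g
    refine trace_integral (ρ g) (Fintype.card K) Fintype.card_ne_zero ?_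
    rw [← map_pow, pow_card_eq_one, map_one]
  -- class sums are integral scalars
  haveI : Module.Finite ℤ (MonoidAlgebra ℤ K) :=
    Module.Finite.equiv ((Finsupp.linearEquivFunOnFinite ℤ ℤ K).symm.trans (MonoidAlgebra.coeffLinearEquiv ℤ).symm)
  have hEndInj : Function.Injective (algebraMap ℂ (Module.End ℂ W)) := by
    intro c c' hcc
    obtain ⟨v, hv⟩ := exists_ne (0 : W)
    have h2 := congrArg (fun (t : Module.End ℂ W) => t v) hcc
    simp only [Module.algebraMap_end_apply] at h2
    exact smul_left_injective ℂ hv h2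
  have exl : ∀ x : K, ∃ lam : ℂ,
      ((∑ g : K, if IsConj x g then ρ g else 0) = lam • (1 : Module.End ℂ W)) ∧
      IsIntegral ℤ lam := by
    intro x
    have hcomm : ∀ h : K, ρ h * (∑ g : K, if IsConj x g then ρ g else 0)
        = (∑ g : K, if IsConj x g then ρ g else 0) * ρ h := by
      intro h
      rw [Finset.mul_sum, Finset.sum_mul]
      have hL : ∀ g : K, ρ h * (if IsConj x g then ρ g else 0)
          = if IsConj x g then ρ (h * g) else 0 := by
        intro g; split <;> simp [map_mul]
      have hR : ∀ g : K, (if IsConj x g then ρ g else 0) * ρ h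
          = if IsConj x g then ρ (g * h) else 0 := by
        intro g; split <;> simp [map_mul]
      simp only [hL, hR]
      refine Fintype.sum_equiv (MulAut.conj h).toEquiv _ _ ?_
      intro g
      have hg : IsConj g (h * g * h⁻¹) := isConj_iff.2 ⟨h, rfl⟩
      have hiff : IsConj x (h * g * h⁻¹) ↔ IsConj x g := ⟨fun hc => hc.trans hg.symm,
        fun hc => hc.trans hg⟩
      have harg : (MulAut.conj h).toEquiv g = h * g * h⁻¹ := rfl
      rw [harg]
      by_cases hc : IsConj x g
      · rw [if_pos hc, if_pos (hiff.mpr hc)]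
        congr 1
        group
      · rw [if_neg hc, if_neg (fun hc' => hc (hiff.mp hc'))]
    obtain ⟨lam, hlam⟩ := schur_scalar ρ hirr _ hcomm
    refine ⟨lam, hlam, ?_⟩
    -- integrality via the integral group ring
    set Θ := (MonoidAlgebra.lift ℤ (Module.End ℂ W) K) ρ with hΘ
    set Z : MonoidAlgebra ℤ K := ∑ g : K, if IsConj x g then MonoidAlgebra.of ℤ K g else 0
      with hZ
    have hZint : IsIntegral ℤ Z := IsIntegral.of_finite ℤ Z
    have hΘZ : Θ Z = lam • (1 : Module.End ℂ W) := by
      rw [hZ, map_sum, ← hlam]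
      refine Finset.sum_congr rfl ?_
      intro g _
      split <;> simp [hΘ, MonoidAlgebra.lift_of]
    have h3 : (algebraMap ℂ (Module.End ℂ W)) lam = lam • (1 : Module.End ℂ W) := by
      rw [Module.algebraMap_end_eq_smul_id]; rfl
    have h4 : IsIntegral ℤ ((algebraMap ℂ (Module.End ℂ W)) lam) := by
      rw [h3, ← hΘZ]; exact hZint.map Θ
    exact (isIntegral_algebraMap_iff hEndInj).mp h4
  choose lam hlam hlamint using exl
  -- orthogonality
  haveI : Invertible ((Fintype.card K : ℂ)) :=
    invertibleOfNonzero (Nat.cast_ne_zero.mpr Fintype.card_ne_zero)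
  have hone : (1 : Module.End ℂ W) ≠ 0 := by
    intro h
    obtain ⟨v, hv⟩ := exists_ne (0 : W)
    exact hv (by simpa using congrArg (fun t : Module.End ℂ W => t v) h)
  have horth : ∑ g : K, χ g⁻¹ * χ g = (Fintype.card K : ℂ) := by
    have hinv : Representation.invariants (Representation.linHom ρ ρ)
        = Submodule.span ℂ {(1 : Module.End ℂ W)} := by
      apply le_antisymm
      · intro f hf
        rw [Representation.mem_invariants] at hf
        have hcomm : ∀ g, ρ g * f = f * ρ g := by
          intro g
          have h1 := hf g
          rw [Representation.linHom_apply] at h1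
          have h2 : (ρ g ∘ₗ f ∘ₗ ρ g⁻¹) * ρ g = ρ g * f := by
            simp only [← Module.End.mul_eq_comp]
            rw [mul_assoc, mul_assoc, ← map_mul, inv_mul_cancel, map_one, mul_one]
          rw [← h2, h1]
        obtain ⟨c, hc⟩ := schur_scalar ρ hirr f hcomm
        exact Submodule.mem_span_singleton.mpr ⟨c, hc.symm⟩
      · rw [Submodule.span_le, Set.singleton_subset_iff]
        rw [SetLike.mem_coe, Representation.mem_invariants]
        intro g
        rw [Representation.linHom_apply]
        simp only [← Module.End.mul_eq_comp, one_mul, mul_one]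
        rw [← map_mul, mul_inv_cancel, map_one]
    have hfr : Module.finrank ℂ (Representation.invariants
        (Representation.linHom ρ ρ)) = 1 := by
      rw [hinv]; exact finrank_span_singleton hone
    have h5 := FDRep.average_char_eq_finrank_invariants
      (FDRep.of (Representation.linHom ρ ρ))
    have hfr2 : Module.finrank ℂ (Representation.invariants
        (FDRep.of (Representation.linHom ρ ρ)).ρ) = 1 := hfr
    have h6 : ∀ g : K, (FDRep.of (Representation.linHom ρ ρ)).character g
        = χ g⁻¹ * χ g := by
      intro g
      exact FDRep.char_linHom (FDRep.of ρ) (FDRep.of ρ) g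
    have h7 := congrArg (fun z : ℂ => (Fintype.card K : ℂ) * z) h5
    simp only [smul_eq_mul, ← mul_assoc, mul_invOf_self, one_mul] at h7
    rw [hfr2] at h7
    calc ∑ g : K, χ g⁻¹ * χ g
        = ∑ g : K, (FDRep.of (Representation.linHom ρ ρ)).character g :=
          Finset.sum_congr rfl (fun g _ => (h6 g).symm)
      _ = (Fintype.card K : ℂ) := by
          rw [Nat.card_eq_fintype_card, mul_inv_cancel₀ (Nat.cast_ne_zero.mpr Fintype.card_ne_zero),
            one_mul] at h7
          rw [h7]; norm_num
  -- conjugacy class decomposition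
  haveI : Fintype (ConjClasses K) := Fintype.ofFinite _
  have hfib := Fintype.sum_fiberwise (ConjClasses.mk : K → ConjClasses K)
    (fun g => χ g⁻¹ * χ g)
  have hclass : ∀ c : ConjClasses K,
      (∑ g : {g : K // ConjClasses.mk g = c}, χ (g : K)⁻¹ * χ (g : K))
      = χ ((Quotient.out c)⁻¹) * lam (Quotient.out c) * (d : ℂ) := by
    intro c
    set x := Quotient.out c with hxdef
    have hmkx : ConjClasses.mk x = c := Quotient.out_eq c
    have hcond : ∀ g : K, (ConjClasses.mk g = c) = IsConj x g := by
      intro g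
      apply propext
      rw [← hmkx, ConjClasses.mk_eq_mk_iff_isConj]
      exact ⟨fun h => h.symm, fun h => h.symm⟩
    have htr : (∑ g : K, if IsConj x g then χ g else 0) = lam x * (d : ℂ) := by
      have h9 := congrArg (LinearMap.trace ℂ W) (hlam x)
      rw [map_sum, map_smul, LinearMap.trace_one] at h9
      simp only [apply_ite (LinearMap.trace ℂ W), map_zero] at h9
      simpa [hχ, smul_eq_mul, hd] using h9
    have hstep : ∀ g : {g : K // ConjClasses.mk g = c},
        χ (g : K)⁻¹ * χ (g : K) = χ x⁻¹ * χ (g : K) := by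
      intro g
      have hgx : IsConj x (g : K) := by
        have := g.2; rw [hcond] at this; exact this
      obtain ⟨u, hu⟩ := isConj_iff.mp hgx
      have hxinv : (g : K)⁻¹ = u * x⁻¹ * u⁻¹ := by
        rw [← hu]; group
      rw [hxinv, hχconj]
    rw [Finset.sum_congr rfl (fun g _ => hstep g), ← Finset.mul_sum]
    have hsub : (∑ g : {g : K // ConjClasses.mk g = c}, χ (g : K))
        = ∑ g : K, if IsConj x g then χ g else 0 := by
      rw [← Finset.sum_filter]
      refine (Finset.sum_subtype _ ?_ χ).symm
      intro g
      simp [hcond g]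
    rw [hsub, htr, mul_assoc]
  have hcard : (Fintype.card K : ℂ)
      = (∑ c : ConjClasses K, χ ((Quotient.out c)⁻¹) * lam (Quotient.out c)) * (d : ℂ) := by
    rw [← horth, ← hfib, Finset.sum_congr rfl (fun c _ => hclass c), Finset.sum_mul]
  set c₀ : ℂ := ∑ c : ConjClasses K, χ ((Quotient.out c)⁻¹) * lam (Quotient.out c) with hc₀
  have hc₀int : IsIntegral ℤ c₀ := by
    have : c₀ ∈ integralClosure ℤ ℂ :=
      Subalgebra.sum_mem _ (fun c _ => mul_mem (hχint _) (hlamint _))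
    exact this
  -- rationality
  have hdC : ((d : ℚ) : ℂ) = (d : ℂ) := by push_cast; ring
  have hdne : (d : ℚ) ≠ 0 := Nat.cast_ne_zero.mpr hdpos.ne'
  set q : ℚ := (Fintype.card K : ℚ) / (d : ℚ) with hq
  have halg : algebraMap ℚ ℂ q = c₀ := by
    rw [hq, map_div₀]
    have h1 : algebraMap ℚ ℂ ((Fintype.card K : ℚ)) = (Fintype.card K : ℂ) :=
      map_natCast (algebraMap ℚ ℂ) _
    have h2 : algebraMap ℚ ℂ ((d : ℚ)) = (d : ℂ) := map_natCast (algebraMap ℚ ℂ) _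
    have hdCne : (d : ℂ) ≠ 0 := Nat.cast_ne_zero.mpr hdpos.ne'
    rw [h1, h2, hcard, mul_div_assoc, div_self hdCne, mul_one]
  have hqint : IsIntegral ℤ q := by
    obtain ⟨p, pmonic, hp⟩ := hc₀int
    refine ⟨p, pmonic, ?_⟩
    have hp' : Polynomial.aeval c₀ p = 0 := hp
    have h10 : Polynomial.aeval (algebraMap ℚ ℂ q) p = algebraMap ℚ ℂ (Polynomial.aeval q p) :=
      Polynomial.aeval_algebraMap_apply ℂ q p
    rw [halg, hp'] at h10
    have h11 : Polynomial.aeval q p = 0 :=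
      (map_eq_zero_iff (algebraMap ℚ ℂ) (algebraMap ℚ ℂ).injective).mp h10.symm
    exact h11
  obtain ⟨nz, hnz⟩ := IsIntegrallyClosed.isIntegral_iff.mp hqint
  have hqd : q * (d : ℚ) = (Fintype.card K : ℚ) := by
    rw [hq]; field_simp
  have hnzq : ((nz : ℚ)) = q := by rw [← hnz]; simp
  rw [← hnzq] at hqd
  have hZeq : (nz * (d : ℤ) : ℤ) = (Fintype.card K : ℤ) := by exact_mod_cast hqd
  have hzdvd : (d : ℤ) ∣ (Fintype.card K : ℤ) := Dvd.intro_left nz hZeq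
  exact Int.ofNat_dvd.mp (by exact_mod_cast hzdvd)


end KeyDvd

section Reduction

variable {K : Type} [Group K]

/-- The class of a cocycle of a finite group has finite order: its `card G` power
is a coboundary. -/
lemma mkClass_pow_card [Fintype K] (a : CocycleGroup K) :
    mkClass a ^ Fintype.card K = 1 := by
  classical
  set n := Fintype.card K
  have hmem : a ^ n ∈ coboundaries K := by
    refine ⟨fun x => ∏ z : K, (a : K → K → ℂˣ) x z, ?_⟩
    intro x y
    have key : (a : K → K → ℂˣ) x y ^ n * (∏ z : K, (a : K → K → ℂˣ) (x * y) z)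
        = (∏ z : K, (a : K → K → ℂˣ) x z) * ∏ z : K, (a : K → K → ℂˣ) y z := by
      have h1 : ∀ z : K, (a : K → K → ℂˣ) x y * (a : K → K → ℂˣ) (x * y) z
          = (a : K → K → ℂˣ) y z * (a : K → K → ℂˣ) x (y * z) := fun z => a.2 x y z
      have h2 : (∏ z : K, ((a : K → K → ℂˣ) x y * (a : K → K → ℂˣ) (x * y) z))
          = ∏ z : K, ((a : K → K → ℂˣ) y z * (a : K → K → ℂˣ) x (y * z)) :=
        Finset.prod_congr rfl (fun z _ => h1 z)
      rw [Finset.prod_mul_distrib, Finset.prod_mul_distrib, Finset.prod_const,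
        Finset.card_univ] at h2
      have h3 : (∏ z : K, (a : K → K → ℂˣ) x (y * z)) = ∏ z : K, (a : K → K → ℂˣ) x z :=
        Equiv.prod_comp (Equiv.mulLeft y) (fun z => (a : K → K → ℂˣ) x z)
      rw [h3] at h2
      rw [h2, mul_comm]
    have hcoe : ((a ^ n : CocycleGroup K) : K → K → ℂˣ) x y
        = (a : K → K → ℂˣ) x y ^ n := rfl
    rw [hcoe, eq_mul_inv_iff_mul_eq]
    exact key
  have : mkClass (a ^ n) = 1 := (QuotientGroup.eq_one_iff _).mpr hmem
  rw [← this]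
  rfl

/-- Twisted central extension of `K` by `ℂˣ` along a cocycle `β`. -/
def GExt (β : CocycleGroup K) : Type _ := ℂˣ × K

namespace GExt

variable (β : CocycleGroup K)

private def bb : K → K → ℂˣ := (β : K → K → ℂˣ)

instance : Mul (GExt β) := ⟨fun p q => (p.1 * q.1 * (β : K → K → ℂˣ) p.2 q.2, p.2 * q.2)⟩
instance : One (GExt β) := ⟨(((β : K → K → ℂˣ) 1 1)⁻¹, 1)⟩
instance : Inv (GExt β) :=
  ⟨fun p => ((((β : K → K → ℂˣ) 1 1))⁻¹ * (((β : K → K → ℂˣ) p.2⁻¹ p.2))⁻¹ * p.1⁻¹, p.2⁻¹)⟩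

lemma mul_def (p q : GExt β) :
    p * q = (p.1 * q.1 * (β : K → K → ℂˣ) p.2 q.2, p.2 * q.2) := rfl
lemma one_def : (1 : GExt β) = ((((β : K → K → ℂˣ) 1 1))⁻¹, 1) := rfl
lemma inv_def (p : GExt β) :
    p⁻¹ = ((((β : K → K → ℂˣ) 1 1))⁻¹ * (((β : K → K → ℂˣ) p.2⁻¹ p.2))⁻¹ * p.1⁻¹, p.2⁻¹) := rfl

lemma beta_one_right (x : K) : (β : K → K → ℂˣ) x 1 = (β : K → K → ℂˣ) 1 1 := by
  have h := β.2 x 1 1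
  simp only [mul_one, one_mul] at h
  exact mul_right_cancel h

lemma beta_one_left (z : K) : (β : K → K → ℂˣ) 1 z = (β : K → K → ℂˣ) 1 1 := by
  have h := β.2 1 1 z
  simp only [mul_one, one_mul] at h
  exact (mul_right_cancel h).symm

instance : Group (GExt β) := by
  refine Group.ofLeftAxioms ?_ ?_ ?_
  · intro p q r
    refine Prod.ext ?_ (mul_assoc _ _ _)
    show (p.1 * q.1 * (β : K → K → ℂˣ) p.2 q.2) * r.1
        * (β : K → K → ℂˣ) (p.2 * q.2) r.2
      = p.1 * (q.1 * r.1 * (β : K → K → ℂˣ) q.2 r.2)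
        * (β : K → K → ℂˣ) p.2 (q.2 * r.2)
    have h := β.2 p.2 q.2 r.2
    calc (p.1 * q.1 * (β : K → K → ℂˣ) p.2 q.2) * r.1
          * (β : K → K → ℂˣ) (p.2 * q.2) r.2
        = p.1 * q.1 * r.1 * ((β : K → K → ℂˣ) p.2 q.2
            * (β : K → K → ℂˣ) (p.2 * q.2) r.2) := by ac_rfl
      _ = p.1 * q.1 * r.1 * ((β : K → K → ℂˣ) q.2 r.2
            * (β : K → K → ℂˣ) p.2 (q.2 * r.2)) := by rw [h]
      _ = p.1 * (q.1 * r.1 * (β : K → K → ℂˣ) q.2 r.2)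
            * (β : K → K → ℂˣ) p.2 (q.2 * r.2) := by ac_rfl
  · intro p
    refine Prod.ext ?_ (one_mul _)
    show ((β : K → K → ℂˣ) 1 1)⁻¹ * p.1 * (β : K → K → ℂˣ) 1 p.2 = p.1
    rw [beta_one_left β p.2, mul_comm (((β : K → K → ℂˣ) 1 1))⁻¹ p.1, mul_assoc,
      inv_mul_cancel, mul_one]
  · intro p
    refine Prod.ext ?_ (inv_mul_cancel _)
    show (((β : K → K → ℂˣ) 1 1))⁻¹ * (((β : K → K → ℂˣ) p.2⁻¹ p.2))⁻¹ * p.1⁻¹ * p.1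
        * (β : K → K → ℂˣ) p.2⁻¹ p.2 = ((β : K → K → ℂˣ) 1 1)⁻¹
    rw [mul_assoc _ p.1⁻¹ p.1, inv_mul_cancel, mul_one, mul_assoc, inv_mul_cancel, mul_one]

end GExt

/-- The subgroup of the twisted extension where the unit component is an `m`-th root of 1. -/
def GExtSub (β : CocycleGroup K) (m : ℕ)
    (hβ : ∀ x y : K, ((β : K → K → ℂˣ) x y) ^ m = 1) : Subgroup (GExt β) where
  carrier := {p | p.1 ^ m = 1}
  one_mem' := by
    show (((β : K → K → ℂˣ) 1 1)⁻¹) ^ m = 1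
    rw [inv_pow, hβ, inv_one]
  mul_mem' := by
    intro p q hp hq
    show ((p * q).1) ^ m = 1
    rw [GExt.mul_def]
    show (p.1 * q.1 * (β : K → K → ℂˣ) p.2 q.2) ^ m = 1
    rw [mul_pow, mul_pow, hp, hq, hβ]
    simp
  inv_mem' := by
    intro p hp
    show ((p⁻¹).1) ^ m = 1
    rw [GExt.inv_def]
    show (((β : K → K → ℂˣ) 1 1)⁻¹ * ((β : K → K → ℂˣ) p.2⁻¹ p.2)⁻¹ * p.1⁻¹) ^ m = 1
    rw [mul_pow, mul_pow, inv_pow, inv_pow, inv_pow, hβ, hβ, hp]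
    simp

/-- The twisted extension subgroup is equivalent to `rootsOfUnity m ℂ × K`. -/
noncomputable def gextSubEquiv (β : CocycleGroup K) (m : ℕ)
    (hβ : ∀ x y : K, ((β : K → K → ℂˣ) x y) ^ m = 1) :
    ↥(GExtSub β m hβ) ≃ (rootsOfUnity m ℂ × K) where
  toFun p := (⟨p.1.1, (mem_rootsOfUnity _ _).mpr p.2⟩, p.1.2)
  invFun q := ⟨((q.1 : ℂˣ), q.2), (mem_rootsOfUnity _ _).mp q.1.2⟩
  left_inv p := rfl
  right_inv q := rfl


lemma piNumber_of_dvd {π : Set ℕ} {m n : ℕ} (h : IsPiNumber π n) (hd : m ∣ n) :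
    IsPiNumber π m := fun p hp hpm => h p hp (hpm.trans hd)

lemma piNumber_mul {π : Set ℕ} {m n : ℕ} (hm : IsPiNumber π m) (hn : IsPiNumber π n) :
    IsPiNumber π (m * n) := by
  intro p hp hpd
  rcases (Nat.Prime.dvd_mul hp).mp hpd with h | h
  exacts [hm p hp h, hn p hp h]

/-- helper for `ℂˣ` identities -/
private lemma units_helper : True := trivial

theorem degree_pi_number {W : Type} [AddCommGroup W] [Module ℂ W] [FiniteDimensional ℂ W]
    [Fintype K] (ρ : ProjRep K W) (hirr : ρ.Irreducible) (π : Set ℕ)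
    (hK : IsPiNumber π (Nat.card K)) (hord : IsPiNumber π (orderOf (mkClass ρ.α))) :
    IsPiNumber π (Module.finrank ℂ W) := by
  classical
  set m := orderOf (mkClass ρ.α) with hm
  have hmpos : 0 < m := by
    refine IsOfFinOrder.orderOf_pos ?_
    exact isOfFinOrder_iff_pow_eq_one.mpr
      ⟨Fintype.card K, Fintype.card_pos, mkClass_pow_card ρ.α⟩
  haveI : NeZero m := ⟨hmpos.ne'⟩
  have hmem : ρ.α ^ m ∈ coboundaries K := by
    rw [← QuotientGroup.eq_one_iff]
    exact (pow_orderOf_eq_one (mkClass ρ.α) : mkClass ρ.α ^ m = 1)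
  obtain ⟨ζ, hζ⟩ := hmem
  have hroot : ∀ x : K, ∃ u : ℂˣ, u ^ m = ζ x := by
    intro x
    obtain ⟨z, hz⟩ := IsAlgClosed.exists_pow_nat_eq ((ζ x : ℂˣ) : ℂ) hmpos
    have hz0 : z ≠ 0 := by
      intro h0
      rw [h0, zero_pow hmpos.ne'] at hz
      exact (Units.ne_zero (ζ x)) hz.symm
    exact ⟨Units.mk0 z hz0, Units.ext (by simp [hz])⟩
  choose η hη using hroot
  have hδcoc : IsMulCocycle (fun x y : K => η x * η y * (η (x * y))⁻¹) := by
    intro x y z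
    apply Units.ext
    simp only [Units.val_mul, Units.val_inv_eq_inv_val, mul_assoc x y z]
    field_simp
  set δ : CocycleGroup K := ⟨fun x y => η x * η y * (η (x * y))⁻¹, hδcoc⟩ with hδdef
  set β : CocycleGroup K := ρ.α * δ⁻¹ with hβdef
  have hβval : ∀ x y : K, (β : K → K → ℂˣ) x y
      = (ρ.α : K → K → ℂˣ) x y * (η x * η y * (η (x * y))⁻¹)⁻¹ := fun x y => rfl
  have hαζ : ∀ x y : K, ((ρ.α : K → K → ℂˣ) x y) ^ m = ζ x * ζ y * (ζ (x * y))⁻¹ := by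
    intro x y
    have := hζ x y
    rw [← this]
    rfl
  have hβm : ∀ x y : K, ((β : K → K → ℂˣ) x y) ^ m = 1 := by
    intro x y
    rw [hβval, mul_pow, inv_pow, mul_pow, mul_pow, inv_pow, hη, hη, hη, hαζ]
    exact mul_inv_cancel _
  set KT := ↥(GExtSub β m hβm) with hKT
  haveI : Fintype (rootsOfUnity m ℂ) := Fintype.ofFinite _
  haveI : Fintype KT := Fintype.ofEquiv _ (gextSubEquiv β m hβm).symm
  have hcardKT : Fintype.card KT = m * Fintype.card K := by
    rw [Fintype.card_congr (gextSubEquiv β m hβm), Fintype.card_prod,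
      ← Nat.card_eq_fintype_card, Complex.card_rootsOfUnity]
  -- the coefficients
  set e : K → ℂ := fun x => ((η x : ℂˣ) : ℂ) with he
  have hene : ∀ x, e x ≠ 0 := fun x => Units.ne_zero (η x)
  set A : K → K → ℂ := fun x y => (((ρ.α : K → K → ℂˣ) x y : ℂˣ) : ℂ) with hA
  have hAne : ∀ x y, A x y ≠ 0 := fun x y => Units.ne_zero _
  have hBval : ∀ x y : K, (((β : K → K → ℂˣ) x y : ℂˣ) : ℂ)
      = A x y * (e x * e y * (e (x * y))⁻¹)⁻¹ := by
    intro x y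
    rw [hβval]
    simp only [Units.val_mul, Units.val_inv_eq_inv_val]
    rfl
  -- φ at 1
  have hφ1 : ∀ v : W, ρ.φ 1 v = A 1 1 • v := by
    intro v
    have h := ρ.rel 1 1 ((ρ.φ 1).symm v)
    simp only [mul_one, LinearEquiv.apply_symm_apply] at h
    exact h
  -- the lifted representation
  set Θf : KT → Module.End ℂ W :=
    fun p => ((((p : GExt β).1 : ℂˣ) : ℂ) * (e (p : GExt β).2)⁻¹) • (ρ.φ (p : GExt β).2 : W →ₗ[ℂ] W)
    with hΘf
  have hΘmul : ∀ p q : KT, Θf (p * q) = Θf p * Θf q := by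
    intro p q
    apply LinearMap.ext
    intro v
    have hsnd : ((p * q : KT) : GExt β).2 = (p : GExt β).2 * (q : GExt β).2 := rfl
    have hfst : (((p * q : KT) : GExt β).1 : ℂ)
        = ((p : GExt β).1 : ℂ) * ((q : GExt β).1 : ℂ)
          * (((β : K → K → ℂˣ) (p : GExt β).2 (q : GExt β).2 : ℂˣ) : ℂ) := by
      rfl
    set s := ((p : GExt β).1 : ℂ)
    set t := ((q : GExt β).1 : ℂ)
    set x := (p : GExt β).2
    set y := (q : GExt β).2
    simp only [hΘf, LinearMap.smul_apply, Module.End.mul_apply, LinearEquiv.coe_coe,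
      hsnd, hfst, map_smul, smul_smul]
    rw [ρ.rel x y v]
    rw [smul_smul]
    congr 1
    rw [hBval]
    field_simp [hene]
    ring
  have hΘone : Θf 1 = 1 := by
    apply LinearMap.ext
    intro v
    have hone1 : ((1 : KT) : GExt β).1 = ((β : K → K → ℂˣ) 1 1)⁻¹ := rfl
    have hone2 : ((1 : KT) : GExt β).2 = (1 : K) := rfl
    simp only [hΘf, LinearMap.smul_apply, LinearEquiv.coe_coe, hone1, hone2,
      Units.val_inv_eq_inv_val]
    rw [hφ1, smul_smul, hBval]
    have h11 : e (1 * (1:K)) = e 1 := by rw [one_mul]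
    rw [h11, Module.End.one_apply]
    have : A 1 1 * (e 1 * e 1 * (e 1)⁻¹)⁻¹ ≠ 0 := by
      have : (((β : K → K → ℂˣ) 1 1 : ℂˣ) : ℂ) ≠ 0 := Units.ne_zero _
      rw [hBval, h11] at this
      exact this
    have hcoef : (A 1 1 * (e 1 * e 1 * (e 1)⁻¹)⁻¹)⁻¹ * (e 1)⁻¹ * A 1 1 = 1 := by
      field_simp
      exact div_self (mul_ne_zero (hAne 1 1) (hene 1))
    rw [hcoef, one_smul]
  set Θ : Representation ℂ KT W := { toFun := Θf, map_one' := hΘone, map_mul' := hΘmul }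
    with hΘ
  -- irreducibility
  haveI hnt : Nontrivial W := hirr.1
  have hirr' : ∀ U : Submodule ℂ W, (∀ g v, v ∈ U → Θ g v ∈ U) → U = ⊥ ∨ U = ⊤ := by
    intro U hU
    refine hirr.2 U ?_
    intro x v hv
    have hx1 : ((1 : ℂˣ), x) ∈ GExtSub β m hβm := by
      show ((1:ℂˣ)) ^ m = 1
      simp
    set p : KT := ⟨((1 : ℂˣ), x), hx1⟩
    have hmem := hU p v hv
    have hΘp : Θ p v = (e x)⁻¹ • (ρ.φ x v) := by
      simp only [hΘ, hΘf]
      show ((((1:ℂˣ) : ℂ)) * (e x)⁻¹) • (ρ.φ x v) = (e x)⁻¹ • (ρ.φ x v)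
      norm_num
    rw [hΘp] at hmem
    have := U.smul_mem (e x) hmem
    rwa [smul_smul, mul_inv_cancel₀ (hene x), one_smul] at this
  have hdvd := key_dvd Θ hnt hirr'
  rw [hcardKT] at hdvd
  have hKfin : IsPiNumber π (Fintype.card K) := by
    rwa [← Nat.card_eq_fintype_card]
  exact piNumber_of_dvd (piNumber_mul hord hKfin) hdvd


end Reduction

section Arith

lemma piPart_mul (π : Set ℕ) {a b : ℕ} (ha : a ≠ 0) (hb : b ≠ 0) :
    piPart π (a * b) = piPart π a * piPart π b := by
  unfold piPart
  rw [Nat.factorization_mul ha hb]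
  exact Finsupp.prod_add_index' (fun p => by simp) (fun p k l => by
    by_cases h : p ∈ π <;> simp [h, pow_add])

lemma piPart_eq_self {π : Set ℕ} {n : ℕ} (hn : n ≠ 0) (h : IsPiNumber π n) :
    piPart π n = n := by
  conv_rhs => rw [← Nat.factorization_prod_pow_eq_self hn]
  unfold piPart
  apply Finsupp.prod_congr
  intro p hp
  rw [Nat.support_factorization] at hp
  rw [if_pos (h p (Nat.prime_of_mem_primeFactors hp) (Nat.dvd_of_mem_primeFactors hp))]

lemma piPart_eq_one {π : Set ℕ} {n : ℕ} (h : ∀ p : ℕ, p.Prime → p ∣ n → p ∉ π) :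
    piPart π n = 1 := by
  unfold piPart
  have h2 : ∀ p ∈ n.factorization.support,
      (if p ∈ π then p ^ n.factorization p else 1) = 1 := by
    intro p hp
    rw [Nat.support_factorization] at hp
    rw [if_neg (h p (Nat.prime_of_mem_primeFactors hp) (Nat.dvd_of_mem_primeFactors hp))]
  rw [Finsupp.prod_congr (g2 := fun _ _ => 1) h2, Finsupp.prod]
  exact Finset.prod_const_one

lemma card_transversal {G : Type} [Group G] [Fintype G] (J : Subgroup G) (T : Finset G)
    (hT : ∀ g : G, ∃! t, t ∈ T ∧ t⁻¹ * g ∈ J) : T.card = J.index := by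
  classical
  have h1 : T.card = Fintype.card (G ⧸ J) := by
    rw [← Finset.card_univ]
    refine Finset.card_bij (fun t _ => (QuotientGroup.mk t : G ⧸ J))
      (fun t ht => Finset.mem_univ _) ?_ ?_
    · intro t1 ht1 t2 ht2 heq
      obtain ⟨t0, _, huniq⟩ := hT t2
      have h2 : t1⁻¹ * t2 ∈ J := QuotientGroup.eq.mp heq
      have e1 := huniq t1 ⟨ht1, h2⟩
      have e2 := huniq t2 ⟨ht2, by simpa using J.one_mem⟩
      rw [e1, e2]
    · intro q _
      induction q using QuotientGroup.induction_on with
      | _ g =>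
        obtain ⟨t, ⟨ht, htJ⟩, _⟩ := hT g
        exact ⟨t, ht, QuotientGroup.eq.mpr htJ⟩
  rw [h1, ← Nat.card_eq_fintype_card]
  rfl

end Arith

end ProjIM


namespace ProjIM

/-- **Degrees in the `π`-decomposition.** Let `G` be a finite `π`-separable group,
`c = [a] = c_π c_π'`, and `V` an irreducible `c`-module with a decomposition
`V = Ind_J^{cG}(V_π ⊗ V_π')`, where `V_π` is an irreducible `c_π|_J`-module whose restriction
to a Hall `π`-subgroup of `J` is irreducible and `V_π'` is an irreducible `c_π'|_J`-module
whose restriction to a Hall `π'`-subgroup of `J` is irreducible. Then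
`(dim V)_π = |G:J|_π · dim V_π` and `(dim V)_π' = |G:J|_π' · dim V_π'`. -/
theorem statement_15 {G : Type} [Group G] [Fintype G] (π : Set ℕ)
    (hπ : ∀ p ∈ π, Nat.Prime p) (hsep : IsPiSeparable π G)
    (a : CocycleGroup G) (cπ cπ' : SchurMultiplier G)
    (hdec : mkClass a = cπ * cπ') (hoπ : IsPiNumber π (orderOf cπ))
    (hoπ' : IsPiNumber πᶜ (orderOf cπ'))
    (M : Type) [AddCommGroup M] [Module ℂ M] [FiniteDimensional ℂ M]
    (V : ProjRep G M) (hirr : V.Irreducible) (hcl : V.coclass = mkClass a)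
    (J : Subgroup G)
    (Mπ : Type) [AddCommGroup Mπ] [Module ℂ Mπ] [FiniteDimensional ℂ Mπ]
    (Mπ' : Type) [AddCommGroup Mπ'] [Module ℂ Mπ'] [FiniteDimensional ℂ Mπ']
    (Vπ : ProjRep ↥J Mπ) (Vπ' : ProjRep ↥J Mπ')
    (hVπirr : Vπ.Irreducible) (hVπ'irr : Vπ'.Irreducible)
    (hVπc : Vπ.coclass = H2Res J cπ) (hVπ'c : Vπ'.coclass = H2Res J cπ')
    (hInd : V.IsInducedFrom J (Vπ.tprod Vπ'))
    (H : Subgroup ↥J) (hHall : IsHall π H) (hHirr : (Vπ.res H).Irreducible)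
    (H' : Subgroup ↥J) (hHall' : IsHall πᶜ H') (hH'irr : (Vπ'.res H').Irreducible) :
    piPart π (Module.finrank ℂ M) = piPart π J.index * Module.finrank ℂ Mπ ∧
    piPart πᶜ (Module.finrank ℂ M) = piPart πᶜ J.index * Module.finrank ℂ Mπ' := by
  classical
  obtain ⟨ζt, hζt, e, he, hcommut, T, hTtrans, hTspan, hTdim⟩ := hInd
  have hTcard : T.card = J.index := card_transversal J T hTtrans
  haveI : Fintype ↥J := Fintype.ofFinite _
  haveI : Fintype ↥H := Fintype.ofFinite _
  haveI : Fintype ↥H' := Fintype.ofFinite _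
  have hordπ : IsPiNumber π (orderOf (mkClass (Vπ.res H).α)) := by
    have h1 : mkClass (Vπ.res H).α = H2Pull H.subtype Vπ.coclass :=
      (QuotientGroup.map_mk _ _ _ _ _).symm
    rw [h1, hVπc]
    exact piNumber_of_dvd hoπ
      ((orderOf_map_dvd (H2Pull H.subtype) (H2Res J cπ)).trans (orderOf_map_dvd (H2Res J) cπ))
  have hordπ' : IsPiNumber πᶜ (orderOf (mkClass (Vπ'.res H').α)) := by
    have h1 : mkClass (Vπ'.res H').α = H2Pull H'.subtype Vπ'.coclass :=
      (QuotientGroup.map_mk _ _ _ _ _).symm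
    rw [h1, hVπ'c]
    exact piNumber_of_dvd hoπ'
      ((orderOf_map_dvd (H2Pull H'.subtype) (H2Res J cπ')).trans (orderOf_map_dvd (H2Res J) cπ'))
  have hdπ : IsPiNumber π (Module.finrank ℂ Mπ) :=
    degree_pi_number (Vπ.res H) hHirr π hHall.1 hordπ
  have hdπ' : IsPiNumber πᶜ (Module.finrank ℂ Mπ') :=
    degree_pi_number (Vπ'.res H') hH'irr πᶜ hHall'.1 hordπ'
  haveI : Nontrivial Mπ := hVπirr.1
  haveI : Nontrivial Mπ' := hVπ'irr.1
  have hdπ0 : Module.finrank ℂ Mπ ≠ 0 := Module.finrank_pos.ne'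
  have hdπ'0 : Module.finrank ℂ Mπ' ≠ 0 := Module.finrank_pos.ne'
  have hidx0 : J.index ≠ 0 := Subgroup.index_ne_zero_of_finite
  have hdim : Module.finrank ℂ M = J.index * (Module.finrank ℂ Mπ * Module.finrank ℂ Mπ') := by
    rw [hTdim, hTcard, Module.finrank_tensorProduct]
  constructor
  · rw [hdim, piPart_mul π hidx0 (mul_ne_zero hdπ0 hdπ'0), piPart_mul π hdπ0 hdπ'0,
      piPart_eq_self hdπ0 hdπ, piPart_eq_one (n := Module.finrank ℂ Mπ') (fun p hp hd => hdπ' p hp hd), mul_one]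
  · rw [hdim, piPart_mul πᶜ hidx0 (mul_ne_zero hdπ0 hdπ'0), piPart_mul πᶜ hdπ0 hdπ'0,
      piPart_eq_self hdπ'0 hdπ', piPart_eq_one (n := Module.finrank ℂ Mπ) (fun p hp hd => by simpa [Set.mem_compl_iff] using hdπ p hp hd), one_mul]

end ProjIM
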